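/- Let a > 0 and let g : ℝ → ℝ be non-decreasing. Let Ω = T × (0,∞) with T ⊂ ℝⁿ bounded open, and suppose w ∈ C²(Ω) ∩ C(closure(Ω)) is bounded, harmonic in Ω, satisfies w ≤ 0 on ∂T × [0,∞), and −∂_λ w + a w ≤ 0 on T × {0}. Then w ≤ 0 in Ω. -/

import Mathlib

/-- Second derivative of `w : ℝⁿ × ℝ → ℝ` in the direction `d`. -/
noncomputable def secondDirDeriv (n : ℕ)
    (w : EuclideanSpace ℝ (Fin n) × ℝ → ℝ) (p d : EuclideanSpace ℝ (Fin n) × ℝ) : ℝ :=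
  fderiv ℝ (fun q => fderiv ℝ w q d) p d

/-- Laplacian of `w : ℝⁿ × ℝ → ℝ` (coordinates `(x, λ)`). -/
noncomputable def cylLaplacian (n : ℕ)
    (w : EuclideanSpace ℝ (Fin n) × ℝ → ℝ) (p : EuclideanSpace ℝ (Fin n) × ℝ) : ℝ :=
  (∑ i : Fin n, secondDirDeriv n w p (EuclideanSpace.single i 1, 0)) +
    secondDirDeriv n w p (0, 1)


open Filter Set in
/-- 1D second-derivative test: at an interior local max, second derivative ≤ 0. -/
lemma second_deriv_nonpos_of_isLocalMax {g G : ℝ → ℝ} {c : ℝ} {U : Set ℝ}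
    (hU : U ∈ nhds (0:ℝ)) (hg : ∀ t ∈ U, HasDerivAt g (G t) t)
    (hG : HasDerivAt G c 0) (hmax : IsLocalMax g 0) : c ≤ 0 := by
  by_contra hc
  push_neg at hc
  have hG0 : G 0 = 0 := hmax.hasDerivAt_eq_zero (hg 0 (mem_of_mem_nhds hU))
  have hslope : Tendsto (fun t => G t / t) (nhdsWithin 0 (Ioi 0)) (nhds c) := by
    have := hasDerivAt_iff_tendsto_slope.mp hG
    have h2 := this.mono_left (nhdsWithin_mono 0 (show Ioi (0:ℝ) ⊆ {0}ᶜ from fun t ht => ne_of_gt ht))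
    simpa [slope_fun_def_field, hG0] using h2
  have hev : ∀ᶠ t in nhdsWithin (0:ℝ) (Ioi 0), 0 < G t := by
    filter_upwards [hslope.eventually (eventually_gt_nhds hc), self_mem_nhdsWithin]
      with t ht ht'
    have h0 : G t = (G t / t) * t := (div_mul_cancel₀ (G t) (ne_of_gt ht')).symm
    rw [h0]; exact mul_pos ht ht'
  have hU' : ∀ᶠ t in nhdsWithin (0:ℝ) (Ioi 0), t ∈ U :=
    eventually_nhdsWithin_of_eventually_nhds (eventually_iff.mpr hU)
  have hm' : ∀ᶠ t in nhdsWithin (0:ℝ) (Ioi 0), g t ≤ g 0 :=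
    eventually_nhdsWithin_of_eventually_nhds hmax
  obtain ⟨u, hu, hsub⟩ := mem_nhdsGT_iff_exists_Ioo_subset.mp
    (hev.and (hU'.and hm'))
  have hu0 : (0:ℝ) < u := hu
  set s := u / 2 with hs
  have hs0 : 0 < s := by positivity
  have hsu : s ∈ Ioo (0:ℝ) u := ⟨hs0, by linarith⟩
  have hmono : StrictMonoOn g (Icc 0 s) := by
    apply strictMonoOn_of_deriv_pos (convex_Icc 0 s)
    · intro t ht
      have htU : t ∈ U := by
        rcases eq_or_lt_of_le ht.1 with h | h
        · rw [← h]; exact mem_of_mem_nhds hU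
        · exact (hsub ⟨h, by simp only [hs] at ht; linarith [ht.2]⟩).2.1
      exact (hg t htU).continuousAt.continuousWithinAt
    · intro t ht
      rw [interior_Icc] at ht
      have htu : t ∈ Ioo (0:ℝ) u := ⟨ht.1, by linarith [ht.2]⟩
      rw [(hg t (hsub htu).2.1).deriv]
      exact (hsub htu).1
  have h1 : g 0 < g s := hmono (left_mem_Icc.mpr hs0.le) (right_mem_Icc.mpr hs0.le) hs0
  have h2 : g s ≤ g 0 := (hsub hsu).2.2
  linarith

open Filter Set in
/-- At an interior local maximum of a `C²` function, every second directional
derivative is nonpositive. -/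
lemma secondDirDeriv_nonpos_of_isLocalMax {n : ℕ}
    {v : EuclideanSpace ℝ (Fin n) × ℝ → ℝ} {s : Set (EuclideanSpace ℝ (Fin n) × ℝ)}
    (hs : IsOpen s) (hv : ContDiffOn ℝ 2 v s) {p : EuclideanSpace ℝ (Fin n) × ℝ}
    (hp : p ∈ s) (hmax : IsLocalMax v p) (d : EuclideanSpace ℝ (Fin n) × ℝ) :
    secondDirDeriv n v p d ≤ 0 := by
  set ℓ : ℝ → EuclideanSpace ℝ (Fin n) × ℝ := fun t => p + t • d with hℓ
  have hℓd : ∀ t : ℝ, HasDerivAt ℓ d t := by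
    intro t
    have := ((hasDerivAt_id t).smul_const d).const_add p
    simp only [one_smul] at this
    exact this
  have hℓc : Continuous ℓ := by continuity
  have hℓ0 : ℓ 0 = p := by simp [hℓ]
  set U : Set ℝ := ℓ ⁻¹' s with hUdef
  have hU : U ∈ nhds (0:ℝ) := by
    have : IsOpen U := hs.preimage hℓc
    exact this.mem_nhds (by simp [hUdef, hℓ0, hp])
  set F : EuclideanSpace ℝ (Fin n) × ℝ → ℝ := fun q => fderiv ℝ v q d with hF
  have hg : ∀ t ∈ U, HasDerivAt (fun t => v (ℓ t)) (F (ℓ t)) t := by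
    intro t ht
    have hdv : DifferentiableAt ℝ v (ℓ t) :=
      (hv.differentiableOn (by norm_num)).differentiableAt (hs.mem_nhds ht)
    exact hdv.hasFDerivAt.comp_hasDerivAt t (hℓd t)
  have hvd : DifferentiableAt ℝ (fderiv ℝ v) p := by
    have h1 : ContDiffOn ℝ 1 (fderiv ℝ v) s := hv.fderiv_of_isOpen hs (by norm_num)
    exact ((h1.differentiableOn (by norm_num)).differentiableAt (hs.mem_nhds hp))
  have hFd : DifferentiableAt ℝ F p := hvd.clm_apply (differentiableAt_const d)
  have hG : HasDerivAt (fun t => F (ℓ t)) (secondDirDeriv n v p d) 0 := by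
    have h := hFd.hasFDerivAt
    rw [← hℓ0] at h
    have h3 := h.comp_hasDerivAt 0 (hℓd 0)
    rw [hℓ0] at h3
    exact h3
  have hmax' : IsLocalMax (fun t => v (ℓ t)) 0 := by
    have h0 : IsLocalMax v (ℓ 0) := by rw [hℓ0]; exact hmax
    exact h0.comp_continuous hℓc.continuousAt
  exact second_deriv_nonpos_of_isLocalMax hU hg hG hmax'

lemma psi_hasDerivAt (l : ℝ) :
    HasDerivAt (fun s : ℝ => Real.exp (-s) - s) (-(Real.exp (-l)) - 1) l := by
  have h1 : HasDerivAt (fun s : ℝ => Real.exp (-s)) (-(Real.exp (-l))) l := by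
    simpa [Function.comp_def] using (Real.hasDerivAt_exp (-l)).comp l (hasDerivAt_neg l)
  exact h1.sub (hasDerivAt_id l)

lemma psi'_hasDerivAt (l : ℝ) :
    HasDerivAt (fun s : ℝ => -(Real.exp (-s)) - 1) (Real.exp (-l)) l := by
  have h1 : HasDerivAt (fun s : ℝ => Real.exp (-s)) (-(Real.exp (-l))) l := by
    simpa [Function.comp_def] using (Real.hasDerivAt_exp (-l)).comp l (hasDerivAt_neg l)
  simpa using h1.neg.sub_const 1

lemma Psi_hasFDerivAt (n : ℕ) (ε : ℝ) (q : EuclideanSpace ℝ (Fin n) × ℝ) :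
    HasFDerivAt (fun q : EuclideanSpace ℝ (Fin n) × ℝ => ε * (Real.exp (-q.2) - q.2))
      ((ε * (-(Real.exp (-q.2)) - 1)) •
        ContinuousLinearMap.snd ℝ (EuclideanSpace ℝ (Fin n)) ℝ) q := by
  have h0 : HasFDerivAt (fun q : EuclideanSpace ℝ (Fin n) × ℝ => Real.exp (-q.2) - q.2)
      ((-(Real.exp (-q.2)) - 1) • ContinuousLinearMap.snd ℝ (EuclideanSpace ℝ (Fin n)) ℝ) q :=
    (psi_hasDerivAt q.2).comp_hasFDerivAt q hasFDerivAt_snd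
  simpa [smul_smul] using h0.const_mul ε

lemma Psi'_hasFDerivAt (n : ℕ) (ε : ℝ) (q : EuclideanSpace ℝ (Fin n) × ℝ) :
    HasFDerivAt (fun q : EuclideanSpace ℝ (Fin n) × ℝ => ε * (-(Real.exp (-q.2)) - 1))
      ((ε * Real.exp (-q.2)) •
        ContinuousLinearMap.snd ℝ (EuclideanSpace ℝ (Fin n)) ℝ) q := by
  have h0 : HasFDerivAt (fun q : EuclideanSpace ℝ (Fin n) × ℝ => -(Real.exp (-q.2)) - 1)
      (Real.exp (-q.2) • ContinuousLinearMap.snd ℝ (EuclideanSpace ℝ (Fin n)) ℝ) q :=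
    (psi'_hasDerivAt q.2).comp_hasFDerivAt q hasFDerivAt_snd
  simpa [smul_smul] using h0.const_mul ε

open Filter Set in
lemma sdd_horiz (n : ℕ) (w : EuclideanSpace ℝ (Fin n) × ℝ → ℝ)
    {Ω : Set (EuclideanSpace ℝ (Fin n) × ℝ)} (hΩopen : IsOpen Ω)
    (hwC2 : ContDiffOn ℝ 2 w Ω) (ε : ℝ) {p : EuclideanSpace ℝ (Fin n) × ℝ} (hp : p ∈ Ω)
    {d : EuclideanSpace ℝ (Fin n) × ℝ} (hd : d.2 = 0) :
    secondDirDeriv n (fun q => w q + ε * (Real.exp (-q.2) - q.2)) p d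
      = secondDirDeriv n w p d := by
  unfold secondDirDeriv
  have hev : (fun q => fderiv ℝ (fun q => w q + ε * (Real.exp (-q.2) - q.2)) q d)
      =ᶠ[nhds p] (fun q => fderiv ℝ w q d) := by
    filter_upwards [hΩopen.mem_nhds hp] with q hq
    have hdw : DifferentiableAt ℝ w q :=
      (hwC2.differentiableOn (by norm_num)).differentiableAt (hΩopen.mem_nhds hq)
    rw [(hdw.hasFDerivAt.fun_add (Psi_hasFDerivAt n ε q)).fderiv]
    simp [hd]
  rw [hev.fderiv_eq]

open Filter Set in
lemma sdd_vert (n : ℕ) (w : EuclideanSpace ℝ (Fin n) × ℝ → ℝ)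
    {Ω : Set (EuclideanSpace ℝ (Fin n) × ℝ)} (hΩopen : IsOpen Ω)
    (hwC2 : ContDiffOn ℝ 2 w Ω) (ε : ℝ) {p : EuclideanSpace ℝ (Fin n) × ℝ} (hp : p ∈ Ω) :
    secondDirDeriv n (fun q => w q + ε * (Real.exp (-q.2) - q.2)) p (0, 1)
      = secondDirDeriv n w p (0, 1) + ε * Real.exp (-p.2) := by
  unfold secondDirDeriv
  have hev : (fun q => fderiv ℝ (fun q => w q + ε * (Real.exp (-q.2) - q.2)) q
        ((0 : EuclideanSpace ℝ (Fin n)), (1:ℝ)))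
      =ᶠ[nhds p] (fun q => fderiv ℝ w q ((0 : EuclideanSpace ℝ (Fin n)), (1:ℝ))
        + ε * (-(Real.exp (-q.2)) - 1)) := by
    filter_upwards [hΩopen.mem_nhds hp] with q hq
    have hdw : DifferentiableAt ℝ w q :=
      (hwC2.differentiableOn (by norm_num)).differentiableAt (hΩopen.mem_nhds hq)
    rw [(hdw.hasFDerivAt.fun_add (Psi_hasFDerivAt n ε q)).fderiv]
    simp
  rw [hev.fderiv_eq]
  have hA : DifferentiableAt ℝ
      (fun q => fderiv ℝ w q ((0 : EuclideanSpace ℝ (Fin n)), (1:ℝ))) p := by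
    have h1 : ContDiffOn ℝ 1 (fderiv ℝ w) Ω := hwC2.fderiv_of_isOpen hΩopen (by norm_num)
    exact ((h1.differentiableOn (by norm_num)).differentiableAt
      (hΩopen.mem_nhds hp)).clm_apply (differentiableAt_const _)
  rw [(hA.hasFDerivAt.fun_add (Psi'_hasFDerivAt n ε p)).fderiv]
  simp

open Filter Set in
/-- Comparison/maximum principle in the half-cylinder `Ω = T × (0,∞)`: if `w` is
bounded, harmonic in `Ω`, `w ≤ 0` on the lateral boundary `∂T × [0,∞)`, and
`-∂_λ w + a w ≤ 0` on `T × {0}` with `a > 0`, then `w ≤ 0` in `Ω`. -/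
theorem stmt_17 (n : ℕ) (a : ℝ) (ha : 0 < a) (g : ℝ → ℝ) (hg : Monotone g)
    (T : Set (EuclideanSpace ℝ (Fin n)))
    (hTopen : IsOpen T) (hTne : T.Nonempty) (hTbdd : Bornology.IsBounded T)
    (Ω : Set (EuclideanSpace ℝ (Fin n) × ℝ))
    (hΩ : Ω = {p | p.1 ∈ T ∧ 0 < p.2})
    (w : EuclideanSpace ℝ (Fin n) × ℝ → ℝ)
    (hwC2 : ContDiffOn ℝ 2 w Ω)
    (hwcont : ContinuousOn w (closure Ω))
    (hwbdd : ∃ M : ℝ, ∀ p, |w p| ≤ M)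
    (hharm : ∀ p ∈ Ω, cylLaplacian n w p = 0)
    (hlat : ∀ x ∈ frontier T, ∀ l : ℝ, 0 ≤ l → w (x, l) ≤ 0)
    (hneu : ∀ x ∈ T, -(fderiv ℝ w (x, (0 : ℝ)) (0, 1)) + a * w (x, 0) ≤ 0) :
    ∀ p ∈ Ω, w p ≤ 0 := by
  have hΩopen : IsOpen Ω := by
    rw [hΩ]
    exact (hTopen.preimage continuous_fst).inter (isOpen_Ioi.preimage continuous_snd)
  obtain ⟨M, hM⟩ := hwbdd
  have hclsub : closure Ω ⊆ {q : EuclideanSpace ℝ (Fin n) × ℝ | q.1 ∈ closure T ∧ 0 ≤ q.2} := by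
    apply closure_minimal
    · rw [hΩ]; intro q hq; exact ⟨subset_closure hq.1, hq.2.le⟩
    · exact (isClosed_closure.preimage continuous_fst).inter (isClosed_Ici.preimage continuous_snd)
  intro p₀ hp₀
  have hp₀T : p₀.1 ∈ T := by rw [hΩ] at hp₀; exact hp₀.1
  have hp₀2 : 0 < p₀.2 := by rw [hΩ] at hp₀; exact hp₀.2
  have key : ∀ ε : ℝ, 0 < ε → w p₀ ≤ ε * (2/a + 1 + p₀.2) := by
    intro ε hε
    set v : EuclideanSpace ℝ (Fin n) × ℝ → ℝ :=
      fun q => w q + ε * (Real.exp (-q.2) - q.2) with hv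
    have hψle : ∀ l : ℝ, 0 ≤ l → Real.exp (-l) - l ≤ 1 := by
      intro l hl
      have h1 : Real.exp (-l) ≤ 1 := Real.exp_le_one_iff.mpr (by linarith)
      linarith
    have hvle : ∀ q ∈ closure Ω, v q ≤ M + ε - ε * q.2 := by
      intro q hq
      have h2 : (0:ℝ) ≤ q.2 := (hclsub hq).2
      have h3 : w q ≤ M := (abs_le.mp (hM q)).2
      have h4 : Real.exp (-q.2) ≤ 1 := Real.exp_le_one_iff.mpr (by linarith)
      have h5 : ε * (Real.exp (-q.2) - q.2) ≤ ε * (1 - q.2) :=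
        mul_le_mul_of_nonneg_left (by linarith) hε.le
      have h6 : v q = w q + ε * (Real.exp (-q.2) - q.2) := rfl
      nlinarith
    set L : ℝ := max ((M + ε - v p₀)/ε + 1) (p₀.2 + 1) with hLdef
    have hL2 : p₀.2 < L := lt_of_lt_of_le (by linarith) (le_max_right _ _)
    have hL0 : 0 < L := hp₀2.trans hL2
    have hL1 : ∀ q ∈ closure Ω, L ≤ q.2 → v q ≤ v p₀ - ε := by
      intro q hq hLq
      have h1 := hvle q hq
      have h3 : (M + ε - v p₀)/ε + 1 ≤ L := le_max_left _ _
      have h4 : ε * ((M + ε - v p₀)/ε + 1) ≤ ε * L := mul_le_mul_of_nonneg_left h3 hε.le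
      have h5 : ε * ((M + ε - v p₀)/ε + 1) = M + ε - v p₀ + ε := by
        field_simp
      have h6 : ε * L ≤ ε * q.2 := mul_le_mul_of_nonneg_left hLq hε.le
      have h7 : M + ε - v p₀ + ε ≤ ε * q.2 := by rw [← h5]; linarith
      linarith
    set K : Set (EuclideanSpace ℝ (Fin n) × ℝ) :=
      closure Ω ∩ {q | q.2 ≤ L} with hK
    have hKcl : IsClosed K :=
      isClosed_closure.inter (isClosed_Iic.preimage continuous_snd)
    have hKbdd : Bornology.IsBounded K := by
      apply Bornology.IsBounded.subset (hTbdd.closure.prod (Metric.isBounded_Icc 0 L))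
      intro q hq
      exact ⟨(hclsub hq.1).1, (hclsub hq.1).2, hq.2⟩
    have hKcomp : IsCompact K := Metric.isCompact_of_isClosed_isBounded hKcl hKbdd
    have hp₀K : p₀ ∈ K := ⟨subset_closure hp₀, hL2.le⟩
    have hvcont : ContinuousOn v K := by
      apply ContinuousOn.add (hwcont.mono inter_subset_left)
      exact (Continuous.continuousOn (by fun_prop))
    obtain ⟨pm, hpmK, hpm⟩ := hKcomp.exists_isMaxOn ⟨p₀, hp₀K⟩ hvcont
    have hmaxK : ∀ q ∈ K, v q ≤ v pm := fun q hq => hpm hq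
    have hpm2L : pm.2 < L := by
      by_contra h
      push_neg at h
      have h1 := hL1 pm hpmK.1 h
      have h2 := hmaxK p₀ hp₀K
      linarith
    have hpmcl := hclsub hpmK.1
    have hclaim : v pm ≤ ε * (2/a + 1) := by
      by_cases hx : pm.1 ∈ T
      · by_cases hl : pm.2 = 0
        · -- bottom boundary: use the Robin condition
          have hpm_eq : pm = (pm.1, (0:ℝ)) := by
            rw [← hl]
          have hva : v pm = w (pm.1, (0:ℝ)) + ε := by
            rw [hpm_eq]
            simp [hv]
          by_cases hdiff : DifferentiableAt ℝ w (pm.1, (0:ℝ))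
          · set D : ℝ := fderiv ℝ w (pm.1, (0:ℝ)) (0, 1) with hD
            have hline : HasDerivAt (fun t : ℝ => ((pm.1 : EuclideanSpace ℝ (Fin n)), t))
                ((0 : EuclideanSpace ℝ (Fin n)), (1:ℝ)) 0 :=
              (hasDerivAt_const (x := (0:ℝ)) (c := pm.1)).prodMk (hasDerivAt_id 0)
            have hw' : HasDerivAt (fun t : ℝ => w (pm.1, t)) D 0 :=
              hdiff.hasFDerivAt.comp_hasDerivAt 0 hline
            have hψ' : HasDerivAt (fun t : ℝ => ε * (Real.exp (-t) - t))
                (ε * (-(Real.exp (-(0:ℝ))) - 1)) 0 := (psi_hasDerivAt 0).const_mul ε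
            have hgd : HasDerivAt (fun t : ℝ => v (pm.1, t))
                (D + ε * (-(Real.exp (-(0:ℝ))) - 1)) 0 := by
              simp only [hv]
              exact hw'.add hψ'
            have hslope : Tendsto (slope (fun t : ℝ => v (pm.1, t)) 0)
                (nhdsWithin 0 (Ioi 0)) (nhds (D + ε * (-(Real.exp (-(0:ℝ))) - 1))) :=
              (hasDerivAt_iff_tendsto_slope.mp hgd).mono_left
                (nhdsWithin_mono 0 (fun t ht => ne_of_gt ht))
            have hDle : D + ε * (-(Real.exp (-(0:ℝ))) - 1) ≤ 0 := by
              refine le_of_tendsto hslope ?_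
              filter_upwards [Ioo_mem_nhdsGT_of_mem
                (⟨le_refl (0:ℝ), hL0⟩ : (0:ℝ) ∈ Ico (0:ℝ) L)] with t ht
              have htΩ : ((pm.1 : EuclideanSpace ℝ (Fin n)), t) ∈ Ω := by
                rw [hΩ]; exact ⟨hx, ht.1⟩
              have htK : ((pm.1 : EuclideanSpace ℝ (Fin n)), t) ∈ K :=
                ⟨subset_closure htΩ, ht.2.le⟩
              have h1 : v (pm.1, t) ≤ v pm := hmaxK _ htK
              have h2 : v (pm.1, (0:ℝ)) = v pm := congrArg v hpm_eq.symm
              rw [slope_def_field]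
              apply div_nonpos_of_nonpos_of_nonneg
              · linarith
              · linarith [ht.1]
            have he : Real.exp (-(0:ℝ)) = 1 := by simp
            have hDw : D ≤ 2 * ε := by
              rw [he] at hDle
              have h3 : ε * (-(1:ℝ) - 1) = -(2 * ε) := by ring
              linarith [hDle, h3.le, h3.ge]
            have hneu' := hneu pm.1 hx
            have hw0 : w (pm.1, (0:ℝ)) ≤ 2 * ε / a := by
              rw [le_div_iff₀ ha]
              have hcomm : w (pm.1, (0:ℝ)) * a = a * w (pm.1, (0:ℝ)) := mul_comm _ _
              linarith
            have h7 : ε * (2/a + 1) = 2 * ε / a + ε := by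
              field_simp
            rw [hva, h7]
            linarith
          · have h0 : fderiv ℝ w (pm.1, (0:ℝ)) = 0 :=
              fderiv_zero_of_not_differentiableAt hdiff
            have hneu' := hneu pm.1 hx
            rw [h0] at hneu'
            simp only [ContinuousLinearMap.zero_apply, neg_zero, zero_add] at hneu'
            have hw0 : w (pm.1, (0:ℝ)) ≤ 0 := by
              by_contra hcon
              push_neg at hcon
              nlinarith [mul_pos ha hcon]
            have ha' : 0 < 2/a := by positivity
            have h7 : ε * (2/a + 1) = ε * (2/a) + ε := by ring
            rw [hva, h7]
            have h8 : 0 < ε * (2/a) := mul_pos hε ha'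
            linarith
        · -- interior maximum: contradiction with strict subharmonicity
          exfalso
          have hpmΩ : pm ∈ Ω := by
            rw [hΩ]
            exact ⟨hx, lt_of_le_of_ne hpmcl.2 (Ne.symm hl)⟩
          have hlocmax : IsLocalMax v pm := by
            have hO : IsOpen (Ω ∩ {q : EuclideanSpace ℝ (Fin n) × ℝ | q.2 < L}) :=
              hΩopen.inter (isOpen_Iio.preimage continuous_snd)
            filter_upwards [hO.mem_nhds ⟨hpmΩ, hpm2L⟩] with q hq
            exact hmaxK q ⟨subset_closure hq.1, show q.2 ≤ L from le_of_lt hq.2⟩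
          have hΨC2 : ContDiff ℝ 2 (fun q : EuclideanSpace ℝ (Fin n) × ℝ =>
              ε * (Real.exp (-q.2) - q.2)) := by
            apply ContDiff.mul contDiff_const
            exact ((Real.contDiff_exp.of_le le_top).comp
              (contDiff_neg.comp contDiff_snd)).sub contDiff_snd
          have hvC2 : ContDiffOn ℝ 2 v Ω := by
            rw [hv]
            exact hwC2.add hΨC2.contDiffOn
          have h1 : cylLaplacian n v pm ≤ 0 := by
            unfold cylLaplacian
            apply add_nonpos
            · apply Finset.sum_nonpos
              intro i _
              exact secondDirDeriv_nonpos_of_isLocalMax hΩopen hvC2 hpmΩ hlocmax _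
            · exact secondDirDeriv_nonpos_of_isLocalMax hΩopen hvC2 hpmΩ hlocmax _
          have h2 : cylLaplacian n v pm = ε * Real.exp (-pm.2) := by
            have hh := hharm pm hpmΩ
            unfold cylLaplacian at hh ⊢
            rw [hv]
            rw [Finset.sum_congr rfl
              (fun i _ => sdd_horiz n w hΩopen hwC2 ε hpmΩ rfl)]
            rw [sdd_vert n w hΩopen hwC2 ε hpmΩ]
            linarith
          have h3 : 0 < ε * Real.exp (-pm.2) := mul_pos hε (Real.exp_pos _)
          linarith
      · -- lateral boundary
        have hfr : pm.1 ∈ frontier T := by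
          rw [hTopen.frontier_eq]
          exact ⟨hpmcl.1, hx⟩
        have hw0 : w pm ≤ 0 := by
          have h1 := hlat pm.1 hfr pm.2 hpmcl.2
          rwa [Prod.mk.eta] at h1
        have h3 := hψle pm.2 hpmcl.2
        have h5 : ε * (Real.exp (-pm.2) - pm.2) ≤ ε * 1 :=
          mul_le_mul_of_nonneg_left h3 hε.le
        have ha' : 0 < 2/a := by positivity
        have h6 : v pm = w pm + ε * (Real.exp (-pm.2) - pm.2) := rfl
        have h7 : ε * (2/a + 1) = ε * (2/a) + ε * 1 := by ring
        have h8 : 0 < ε * (2/a) := mul_pos hε ha'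
        rw [h7]
        linarith
    have h4 : v p₀ ≤ v pm := hmaxK p₀ hp₀K
    have h5 : v p₀ = w p₀ + ε * (Real.exp (-p₀.2) - p₀.2) := rfl
    have hexp0 : 0 < Real.exp (-p₀.2) := Real.exp_pos _
    have h6 : ε * (Real.exp (-p₀.2) - p₀.2) = ε * Real.exp (-p₀.2) - ε * p₀.2 := by ring
    have h7 : ε * (2/a + 1 + p₀.2) = ε * (2/a + 1) + ε * p₀.2 := by ring
    have h8 : 0 < ε * Real.exp (-p₀.2) := mul_pos hε hexp0
    have h9 : w p₀ = v p₀ - ε * Real.exp (-p₀.2) + ε * p₀.2 := by rw [h5]; ring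
    have h10 : v p₀ ≤ ε * (2/a + 1) := le_trans h4 hclaim
    rw [h9, h7]
    linarith [h10, h8]
  by_contra hpos
  push_neg at hpos
  have hc : 0 < 2/a + 1 + p₀.2 := by positivity
  have hkey := key (w p₀ / (2 * (2/a + 1 + p₀.2))) (by positivity)
  have heq : w p₀ / (2 * (2/a + 1 + p₀.2)) * (2/a + 1 + p₀.2) = w p₀ / 2 := by
    field_simp
  rw [heq] at hkey
  linarith
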